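/- Let s = 4, q = 3 and let c ∈ ℝ^4 have pairwise distinct entries. If A ∈ ℝ^{4×4} is lower triangular, K ∈ ℝ^{4×4} is diagonal, and V_2^T (AC − CA − K) V_3 = 0 where C = diag(c_i), then the third diagonal entry of K vanishes: K_{33} = 0. -/
import Mathlib


open Matrix BigOperators

/-- Vandermonde matrix `V_k = (𝟙, c, c², …, c^{k−1}) ∈ ℝ^{4×k}` (entrywise powers). -/
def Vand (c : Fin 4 → ℝ) (k : ℕ) : Matrix (Fin 4) (Fin k) ℝ :=
  Matrix.of fun i j => c i ^ (j : ℕ)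

set_option maxRecDepth 10000 in
set_option maxHeartbeats 1000000 in
/-- Theorem 5.1(b): for `s = 4`, `q = 3`, distinct nodes, lower triangular `A` and
diagonal `K`, the condition `V_2ᵀ (AC − CA − K) V_3 = 0` forces `K_{33} = 0`
(the third diagonal entry, index `2` in 0-based numbering). -/
theorem stmt8 (c : Fin 4 → ℝ) (hc : Function.Injective c)
    (A K : Matrix (Fin 4) (Fin 4) ℝ)
    (hA : ∀ i j : Fin 4, i < j → A i j = 0) (hK : K.IsDiag)
    (h : (Vand c 2)ᵀ *
        (A * Matrix.diagonal c - Matrix.diagonal c * A - K) * Vand c 3 = 0) :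
    K 2 2 = 0 := by
  have e : ∀ (a : Fin 2) (b : Fin 3),
      ((Vand c 2)ᵀ * (A * Matrix.diagonal c - Matrix.diagonal c * A - K) * Vand c 3) a b = 0 :=
    fun a b => by rw [h]; exact Matrix.zero_apply a b
  have hA01 := hA 0 1 (by decide)
  have hA02 := hA 0 2 (by decide)
  have hA03 := hA 0 3 (by decide)
  have hA12 := hA 1 2 (by decide)
  have hA13 := hA 1 3 (by decide)
  have hA23 := hA 2 3 (by decide)
  have hK' : ∀ i j : Fin 4, i ≠ j → K i j = 0 := fun i j hij => hK hij
  have hK01 := hK' 0 1 (by decide); have hK02 := hK' 0 2 (by decide)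
  have hK03 := hK' 0 3 (by decide); have hK10 := hK' 1 0 (by decide)
  have hK12 := hK' 1 2 (by decide); have hK13 := hK' 1 3 (by decide)
  have hK20 := hK' 2 0 (by decide); have hK21 := hK' 2 1 (by decide)
  have hK23 := hK' 2 3 (by decide); have hK30 := hK' 3 0 (by decide)
  have hK31 := hK' 3 1 (by decide); have hK32 := hK' 3 2 (by decide)
  have e00 := e 0 0; have e01 := e 0 1; have e02 := e 0 2
  have e10 := e 1 0; have e11 := e 1 1; have e12 := e 1 2
  simp only [Vand, Matrix.mul_apply, Matrix.transpose_apply, Matrix.sub_apply,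
    Matrix.mul_diagonal, Matrix.diagonal_mul, Matrix.of_apply, Fin.sum_univ_four, Fin.isValue,
    hA01, hA02, hA03, hA12, hA13, hA23, hK01, hK02, hK03, hK10, hK12, hK13,
    hK20, hK21, hK23, hK30, hK31, hK32, if_true, if_false,
    Fin.val_zero, Fin.val_one, Fin.val_two, pow_zero, pow_one,
    mul_zero, zero_mul, mul_ite, ite_mul, add_zero, zero_add, zero_sub, sub_zero,
    mul_one, one_mul] at e00 e01 e02 e10 e11 e12
  simp only [Matrix.diagonal_apply, Fin.isValue, show ((0:Fin 4) = 0) = True by simp,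
    show ((1:Fin 4) = 1) = True by simp, show ((2:Fin 4) = 2) = True by simp,
    show ((3:Fin 4) = 3) = True by simp, show ((0:Fin 4) = 1) = False by simp,
    show ((0:Fin 4) = 2) = False by simp, show ((0:Fin 4) = 3) = False by simp,
    show ((1:Fin 4) = 0) = False by simp, show ((1:Fin 4) = 2) = False by simp,
    show ((1:Fin 4) = 3) = False by simp, show ((2:Fin 4) = 0) = False by simp,
    show ((2:Fin 4) = 1) = False by simp, show ((2:Fin 4) = 3) = False by simp,
    show ((3:Fin 4) = 0) = False by simp, show ((3:Fin 4) = 1) = False by simp,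
    show ((3:Fin 4) = 2) = False by simp, if_true, if_false,
    mul_zero, zero_mul, add_zero, zero_add, sub_zero, zero_sub] at e00 e01 e02 e10 e11 e12
  have key : K 2 2 * ((c 2 - c 3) * (c 2 - c 0) * (c 2 - c 1)) = 0 := by
    linear_combination (c 3 * c 0 * c 1) * e00 - (c 3 * (c 0 + c 1)) * e01 + c 3 * e02
      - (c 0 * c 1) * e10 + (c 0 + c 1) * e11 - e12
  have h1 : c 2 - c 3 ≠ 0 := sub_ne_zero.mpr (fun hh => by exact absurd (hc hh) (by decide))
  have h2 : c 2 - c 0 ≠ 0 := sub_ne_zero.mpr (fun hh => by exact absurd (hc hh) (by decide))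
  have h3 : c 2 - c 1 ≠ 0 := sub_ne_zero.mpr (fun hh => by exact absurd (hc hh) (by decide))
  exact (mul_eq_zero.mp key).resolve_right
    (mul_ne_zero (mul_ne_zero h1 h2) h3)
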